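/- arXiv:2211.13395 — 4 statements merged into one kernel-verified Lean document; each statement's English description precedes it below -/
import Mathlib

section
/- Jensen-type inequality for SOS-convex polynomials (Lasserre): if f ∈ ℝ[x] is SOS-convex and w is a truncated moment sequence of degree 2d₁ with w₀ = 1 and M_{d₁}[w] ⪰ 0, where deg(f) ≤ 2d₁, then ⟨f, w⟩ ≥ f(π(w)), where π(w) = (w_{e₁},…,w_{e_n}) is the vector of first-order moments. -/
open MvPolynomial Finset

variable {σ : Type*}

lemma deg_eq (d : σ →₀ ℕ) : d.degree = d.sum fun _ e => e := by
  rw [Finsupp.degree, Finsupp.sum]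
  rfl

lemma deg_add (a b : σ →₀ ℕ) : (a+b).degree = a.degree + b.degree := by
  classical
  rw [deg_eq, deg_eq, deg_eq]
  exact Finsupp.sum_add_index' (fun _ => rfl) (fun _ _ _ => rfl)

/-- top homogeneous component of a product -/
lemma hc_top_mul {R : Type*} [CommRing R] (p q : MvPolynomial σ R) (a b : ℕ)
    (hp : p.totalDegree ≤ a) (hq : q.totalDegree ≤ b) :
    homogeneousComponent (a+b) (p*q)
      = homogeneousComponent a p * homogeneousComponent b q := by
  classical
  ext d
  rw [coeff_homogeneousComponent]
  split_ifs with hd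
  · rw [coeff_mul, coeff_mul]
    apply Finset.sum_congr rfl
    intro x hx
    rw [coeff_homogeneousComponent, coeff_homogeneousComponent]
    by_cases h1 : coeff x.1 p = 0
    · simp [h1]
    by_cases h2 : coeff x.2 q = 0
    · simp [h2]
    have hx1 : x.1.degree ≤ a := by
      have := le_totalDegree (mem_support_iff.mpr h1)
      rw [← deg_eq] at this; exact this.trans hp
    have hx2 : x.2.degree ≤ b := by
      have := le_totalDegree (mem_support_iff.mpr h2)
      rw [← deg_eq] at this; exact this.trans hq
    have hsum : x.1.degree + x.2.degree = a + b := by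
      rw [← deg_add, (Finset.HasAntidiagonal.mem_antidiagonal.mp hx : x.1 + x.2 = d), hd]
    have e1 : x.1.degree = a := by omega
    have e2 : x.2.degree = b := by omega
    rw [if_pos e1, if_pos e2]
  · exact (((homogeneousComponent_isHomogeneous a p).mul
      (homogeneousComponent_isHomogeneous b q)).coeff_eq_zero hd).symm

/-- a sum of squares of real mv-polynomials is zero iff all are zero -/
lemma sq_sum_zero {ι : Type*} (s : Finset ι) (q : ι → MvPolynomial σ ℝ)
    (h : ∑ j ∈ s, q j * q j = 0) : ∀ j ∈ s, q j = 0 := by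
  intro j hj
  apply MvPolynomial.funext
  intro x
  have hx : ∑ j ∈ s, (eval x (q j))^2 = 0 := by
    have := congrArg (eval x) h
    simpa [sq] using this
  have := (Finset.sum_eq_zero_iff_of_nonneg (fun i _ => sq_nonneg (eval x (q i)))).mp hx j hj
  simpa using pow_eq_zero_iff (n := 2) (by norm_num) |>.mp this

lemma hc_totalDegree_ne_zero {R : Type*} [CommRing R] (p : MvPolynomial σ R) (hp : p ≠ 0) :
    homogeneousComponent p.totalDegree p ≠ 0 := by
  classical
  obtain ⟨d, hd, hdeg⟩ := p.support.exists_mem_eq_sup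
    (MvPolynomial.support_nonempty.mpr hp) (fun s => s.sum fun _ e => e)
  intro h0
  have : coeff d (homogeneousComponent p.totalDegree p) = coeff d p := by
    rw [coeff_homogeneousComponent, if_pos]
    rw [deg_eq, MvPolynomial.totalDegree]
    exact hdeg.symm
  rw [h0] at this
  exact mem_support_iff.mp hd (by simpa using this.symm)

/-- degree cancellation for sums of squares over ℝ -/
lemma sos_degree_le {ι : Type*} (s : Finset ι) (q : ι → MvPolynomial σ ℝ) (d : ℕ)
    (h : (∑ j ∈ s, q j * q j).totalDegree ≤ 2*d) : ∀ j ∈ s, (q j).totalDegree ≤ d := by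
  classical
  by_contra hcon
  push_neg at hcon
  obtain ⟨j₀, hj₀, hdj₀⟩ := hcon
  set D := s.sup fun j => (q j).totalDegree with hD
  have hDd : d < D := lt_of_lt_of_le hdj₀ (Finset.le_sup (f := fun j => (q j).totalDegree) hj₀)
  have hlt : (∑ j ∈ s, q j * q j).totalDegree < D + D := by omega
  have hzero : homogeneousComponent (D+D) (∑ j ∈ s, q j * q j) = 0 :=
    homogeneousComponent_eq_zero _ _ hlt
  rw [map_sum] at hzero
  have heq : ∀ j ∈ s, homogeneousComponent (D+D) (q j * q j)
      = homogeneousComponent D (q j) * homogeneousComponent D (q j) := fun j hj =>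
    hc_top_mul _ _ D D (Finset.le_sup (f := fun j => (q j).totalDegree) hj) (Finset.le_sup (f := fun j => (q j).totalDegree) hj)
  rw [Finset.sum_congr rfl heq] at hzero
  obtain ⟨j₁, hj₁, hDj₁⟩ := s.exists_mem_eq_sup ⟨j₀, hj₀⟩ (fun j => (q j).totalDegree)
  have hDj₁' : D = (q j₁).totalDegree := hD.trans hDj₁
  have hq1 : q j₁ ≠ 0 := by
    intro h0
    rw [h0, totalDegree_zero] at hDj₁'
    omega
  have hne := hc_totalDegree_ne_zero (q j₁) hq1
  apply hne
  have hz := sq_sum_zero s _ hzero j₁ hj₁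
  rwa [hDj₁'] at hz

open Finset intervalIntegral

noncomputable def Mw (m : ℕ) : ℝ := 1/((m+1)*(m+2))

lemma Mw_integral (m : ℕ) : ∫ s in (0:ℝ)..1, (1-s)*s^m = Mw m := by
  have h : ∀ s : ℝ, (1-s)*s^m = s^m - s^(m+1) := by intro s; ring
  simp_rw [h]
  rw [integral_sub (intervalIntegrable_pow m) (intervalIntegrable_pow (m+1)),
    integral_pow, integral_pow, Mw]
  rw [one_pow, one_pow, zero_pow (by omega : m+1 ≠ 0), zero_pow (by omega : m+2 ≠ 0)]
  push_cast
  rw [div_sub_div _ _ (by positivity) (by positivity), div_eq_div_iff (by positivity) (by positivity)]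
  ring

lemma hankel_psd (N : ℕ) : (Matrix.of fun k l : Fin N => Mw (k+l)).PosSemidef := by
  rw [Matrix.posSemidef_iff_dotProduct_mulVec]
  constructor
  · ext k l
    simp [Matrix.IsHermitian, Matrix.conjTranspose_apply, Matrix.of_apply, Nat.add_comm]
  · intro x
    have key : dotProduct (star x) ((Matrix.of fun k l : Fin N => Mw (k+l)).mulVec x)
        = ∫ s in (0:ℝ)..1, (1-s)*(∑ k : Fin N, x k * s^(k:ℕ))^2 := by
      
      have : ∀ s : ℝ, (1-s)*(∑ k : Fin N, x k * s^(k:ℕ))^2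
          = ∑ k : Fin N, ∑ l : Fin N, x k * x l * ((1-s)*s^((k:ℕ)+(l:ℕ))) := by
        intro s
        rw [sq, Finset.sum_mul_sum]
        rw [Finset.mul_sum]
        apply Finset.sum_congr rfl; intro k _
        rw [Finset.mul_sum]
        apply Finset.sum_congr rfl; intro l _
        rw [pow_add]; ring
      simp_rw [this]
      rw [integral_finset_sum]
      · apply Finset.sum_congr rfl; intro k _
        rw [integral_finset_sum]
        · simp only [star_trivial, dotProduct, Matrix.mulVec, Matrix.of_apply, Finset.mul_sum]
          apply Finset.sum_congr rfl; intro l _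
          rw [integral_const_mul, Mw_integral]
          ring
        · intro l _
          apply Continuous.intervalIntegrable
          continuity
      · intro k _
        apply Continuous.intervalIntegrable
        apply continuous_finset_sum
        intro l _
        continuity
    rw [key]
    apply integral_nonneg zero_le_one
    intro u hu
    have : 0 ≤ 1 - u := by simp at hu; linarith [hu.2]
    positivity

lemma hankel_decomp (N : ℕ) : ∃ B : Fin N → Fin N → ℝ,
    ∀ k l : Fin N, Mw ((k:ℕ)+(l:ℕ)) = ∑ r : Fin N, B r k * B r l := by
  open scoped MatrixOrder Matrix.Norms.L2Operator in
  obtain ⟨B, hB⟩ := CStarAlgebra.nonneg_iff_eq_star_mul_self.mp (hankel_psd N).nonneg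
  refine ⟨fun r k => B r k, fun k l => ?_⟩
  have := congrArg (fun M => M k l) hB
  simpa [Matrix.mul_apply, Matrix.conjTranspose_apply] using this

open MvPolynomial Finset Polynomial

variable {n : ℕ}

noncomputable abbrev uu (a : Fin n → ℝ) (i : Fin n) : MvPolynomial (Fin n) ℝ :=
  MvPolynomial.X i - MvPolynomial.C (a i)

noncomputable def σm (a : Fin n → ℝ) :
    MvPolynomial (Fin n) ℝ →ₐ[ℝ] Polynomial (MvPolynomial (Fin n) ℝ) :=
  MvPolynomial.aeval (fun i => Polynomial.C (MvPolynomial.C (a i)) + Polynomial.X * Polynomial.C (uu a i))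

lemma σm_X (a : Fin n → ℝ) (i : Fin n) :
    σm a (MvPolynomial.X i)
      = Polynomial.C (MvPolynomial.C (a i)) + Polynomial.X * Polynomial.C (uu a i) := by
  simp [σm]

lemma σm_C (a : Fin n → ℝ) (r : ℝ) :
    σm a (MvPolynomial.C r) = Polynomial.C (MvPolynomial.C r) := by
  simp [σm, MvPolynomial.aeval_C]

lemma eval_one_σm (a : Fin n → ℝ) (f : MvPolynomial (Fin n) ℝ) :
    Polynomial.eval 1 (σm a f) = f := by
  induction f using MvPolynomial.induction_on with
  | C r => rw [σm_C]; simp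
  | add p q hp hq => rw [map_add, Polynomial.eval_add, hp, hq]
  | mul_X p i hp => rw [map_mul, Polynomial.eval_mul, hp, σm_X]; simp [uu]

lemma coeff_zero_σm (a : Fin n → ℝ) (f : MvPolynomial (Fin n) ℝ) :
    Polynomial.coeff (σm a f) 0 = MvPolynomial.C (MvPolynomial.eval a f) := by
  induction f using MvPolynomial.induction_on with
  | C r => rw [σm_C]; simp
  | add p q hp hq => rw [map_add, Polynomial.coeff_add, hp, hq]; simp
  | mul_X p i hp =>
      rw [map_mul, Polynomial.mul_coeff_zero, hp, σm_X]
      simp [uu]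

lemma deriv_σm (a : Fin n → ℝ) (f : MvPolynomial (Fin n) ℝ) :
    Polynomial.derivative (σm a f)
      = ∑ i, σm a (pderiv i f) * Polynomial.C (uu a i) := by
  induction f using MvPolynomial.induction_on with
  | C r => rw [σm_C]; simp
  | add p q hp hq =>
      rw [map_add, map_add, hp, hq, ← Finset.sum_add_distrib]
      apply Finset.sum_congr rfl; intro i _
      simp only [map_add, add_mul]
  | mul_X p i₀ hp =>
      rw [map_mul, Polynomial.derivative_mul, hp, σm_X]
      have hD : Polynomial.derivative (Polynomial.C (MvPolynomial.C (a i₀))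
          + Polynomial.X * Polynomial.C (uu a i₀)) = Polynomial.C (uu a i₀) := by
        simp
      rw [hD]
      have hR : ∀ i : Fin n, σm a (pderiv i (p * MvPolynomial.X i₀)) * Polynomial.C (uu a i)
          = σm a (pderiv i p) * σm a (MvPolynomial.X i₀) * Polynomial.C (uu a i)
            + σm a p * (if i = i₀ then σm a 1 else 0) * Polynomial.C (uu a i) := by
        intro i
        rw [pderiv_mul, map_add, add_mul, map_mul, map_mul]
        congr 2
        by_cases h : i = i₀
        · subst h; rw [pderiv_X_self, if_pos rfl]
        · rw [pderiv_X_of_ne (Ne.symm h), if_neg h, map_zero]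
      rw [Finset.sum_congr rfl (fun i _ => hR i), Finset.sum_add_distrib]
      rw [Finset.sum_mul]
      refine congrArg₂ (· + ·) ?_ ?_
      · apply Finset.sum_congr rfl; intro i _; rw [σm_X]; ring
      · rw [Finset.sum_eq_single i₀]
        · rw [if_pos rfl, map_one, mul_one]
        · intro b _ hb; rw [if_neg hb, mul_zero, zero_mul]
        · intro h; exact absurd (Finset.mem_univ i₀) h

lemma coeff_one_σm (a : Fin n → ℝ) (f : MvPolynomial (Fin n) ℝ) :
    Polynomial.coeff (σm a f) 1
      = ∑ i, MvPolynomial.C (MvPolynomial.eval a (pderiv i f)) * uu a i := by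
  have h := congrArg (fun p => Polynomial.coeff p 0) (deriv_σm a f)
  rw [Polynomial.coeff_derivative] at h
  norm_num at h
  rw [h]
  apply Finset.sum_congr rfl; intro i _
  rw [coeff_zero_σm]

lemma dd_σm_sos (a : Fin n → ℝ) (f : MvPolynomial (Fin n) ℝ) {kk : ℕ}
    (V : Fin kk → Fin n → MvPolynomial (Fin n) ℝ)
    (hV : ∀ i j, pderiv i (pderiv j f) = ∑ t, V t i * V t j) :
    Polynomial.derivative (Polynomial.derivative (σm a f))
      = ∑ t, (∑ i, σm a (V t i) * Polynomial.C (uu a i))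
           * (∑ i, σm a (V t i) * Polynomial.C (uu a i)) := by
  rw [deriv_σm, map_sum]
  have h1 : ∀ i : Fin n, Polynomial.derivative (σm a (pderiv i f) * Polynomial.C (uu a i))
      = ∑ j, σm a (pderiv j (pderiv i f)) * Polynomial.C (uu a j) * Polynomial.C (uu a i) := by
    intro i
    rw [Polynomial.derivative_mul, Polynomial.derivative_C, mul_zero, add_zero, deriv_σm,
      Finset.sum_mul]
  rw [Finset.sum_congr rfl (fun i _ => h1 i)]
  have h2 : ∀ i j : Fin n, σm a (pderiv j (pderiv i f)) * Polynomial.C (uu a j) * Polynomial.C (uu a i)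
      = ∑ t, (σm a (V t j) * Polynomial.C (uu a j)) * (σm a (V t i) * Polynomial.C (uu a i)) := by
    intro i j
    rw [hV j i, map_sum, Finset.sum_mul, Finset.sum_mul]
    apply Finset.sum_congr rfl; intro t _
    rw [map_mul]; ring
  calc ∑ i, ∑ j, σm a (pderiv j (pderiv i f)) * Polynomial.C (uu a j) * Polynomial.C (uu a i)
      = ∑ i, ∑ j, ∑ t, (σm a (V t j) * Polynomial.C (uu a j)) * (σm a (V t i) * Polynomial.C (uu a i)) := by
        exact Finset.sum_congr rfl fun i _ => Finset.sum_congr rfl fun j _ => h2 i j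
    _ = ∑ i : Fin n, ∑ t, ∑ j : Fin n, (σm a (V t j) * Polynomial.C (uu a j)) * (σm a (V t i) * Polynomial.C (uu a i)) :=
        Finset.sum_congr rfl fun y _ => Finset.sum_comm
    _ = ∑ t, ∑ i : Fin n, ∑ j : Fin n, (σm a (V t j) * Polynomial.C (uu a j)) * (σm a (V t i) * Polynomial.C (uu a i)) :=
        Finset.sum_comm
    _ = ∑ t, (∑ i, σm a (V t i) * Polynomial.C (uu a i)) * (∑ i, σm a (V t i) * Polynomial.C (uu a i)) := by
        apply Finset.sum_congr rfl; intro t _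
        rw [Finset.sum_mul_sum]
        exact Finset.sum_comm


lemma Mw_coeff {R : Type*} [CommRing R] [Algebra ℝ R] (P : Polynomial R) (m : ℕ) :
    Mw m • (Polynomial.derivative (Polynomial.derivative P)).coeff m = P.coeff (m+2) := by
  rw [Polynomial.coeff_derivative, Polynomial.coeff_derivative]
  have h1 : (P.coeff (m + 1 + 1) * (↑(m + 1) + 1) * (↑m + 1)) = ((m+2)*(m+1) : ℕ) • P.coeff (m+2) := by
    rw [nsmul_eq_mul]
    push_cast
    ring
  rw [h1, ← Nat.cast_smul_eq_nsmul ℝ, smul_smul]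
  have h2 : Mw m * (((m+2)*(m+1) : ℕ) : ℝ) = 1 := by
    rw [Mw]
    push_cast
    rw [div_mul_eq_mul_div, one_mul, div_eq_one_iff_eq (by positivity)]
    ring
  rw [h2, one_smul]

lemma weighted_sq {R : Type*} [CommRing R] [Algebra ℝ R] (Q : Polynomial R) (Kq N : ℕ)
    (hq : Q.natDegree < Kq) (hN : 2*Kq ≤ N+1) :
    ∑ m ∈ Finset.range N, Mw m • (Q*Q).coeff m
      = ∑ k ∈ Finset.range Kq, ∑ l ∈ Finset.range Kq, Mw (k+l) • (Q.coeff k * Q.coeff l) := by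
  have hrep : Q * Q = ∑ k ∈ Finset.range Kq, ∑ l ∈ Finset.range Kq,
      Polynomial.monomial (k+l) (Q.coeff k * Q.coeff l) := by
    conv_lhs => rw [Polynomial.as_sum_range' Q Kq hq]
    rw [Finset.sum_mul_sum]
    exact Finset.sum_congr rfl fun k _ => Finset.sum_congr rfl fun l _ =>
      Polynomial.monomial_mul_monomial k l _ _
  calc ∑ m ∈ Finset.range N, Mw m • (Q*Q).coeff m
      = ∑ m ∈ Finset.range N, ∑ k ∈ Finset.range Kq, ∑ l ∈ Finset.range Kq,
          (if k + l = m then Mw m • (Q.coeff k * Q.coeff l) else 0) := by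
        apply Finset.sum_congr rfl; intro m _
        rw [hrep, Polynomial.finset_sum_coeff, Finset.smul_sum]
        apply Finset.sum_congr rfl; intro k _
        rw [Polynomial.finset_sum_coeff, Finset.smul_sum]
        apply Finset.sum_congr rfl; intro l _
        rw [Polynomial.coeff_monomial]
        split_ifs <;> simp
    _ = ∑ k ∈ Finset.range Kq, ∑ l ∈ Finset.range Kq, ∑ m ∈ Finset.range N,
          (if k + l = m then Mw m • (Q.coeff k * Q.coeff l) else 0) := by
        rw [Finset.sum_comm]
        apply Finset.sum_congr rfl; intro k _
        rw [Finset.sum_comm]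
    _ = ∑ k ∈ Finset.range Kq, ∑ l ∈ Finset.range Kq, Mw (k+l) • (Q.coeff k * Q.coeff l) := by
        apply Finset.sum_congr rfl; intro k hk
        apply Finset.sum_congr rfl; intro l hl
        have hm : k + l ∈ Finset.range N := by
          simp only [Finset.mem_range] at hk hl ⊢; omega
        rw [Finset.sum_ite_eq (Finset.range N) (k+l) (fun m => Mw m • (Q.coeff k * Q.coeff l)),
          if_pos hm]

section Taylor
open MvPolynomial Finset Polynomial
variable {n : ℕ}

lemma taylor_g (a : Fin n → ℝ) (f : MvPolynomial (Fin n) ℝ) (N : ℕ)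
    (hN : (σm a f).natDegree < N) :
    f - MvPolynomial.C (MvPolynomial.eval a f)
      - ∑ i, MvPolynomial.C (MvPolynomial.eval a (pderiv i f)) * uu a i
      = ∑ m ∈ Finset.range N,
          Mw m • (Polynomial.derivative (Polynomial.derivative (σm a f))).coeff m := by
  have hd : (σm a f).natDegree < N + 2 := by omega
  have hf1 : f = ∑ i ∈ Finset.range (N+2), (σm a f).coeff i := by
    conv_lhs => rw [← eval_one_σm a f]
    rw [Polynomial.eval_eq_sum_range' hd]
    simp
  have hsplit : ∑ i ∈ Finset.range (N+2), (σm a f).coeff i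
      = (∑ i ∈ Finset.range N, (σm a f).coeff (i+2)) + (σm a f).coeff 1 + (σm a f).coeff 0 := by
    rw [Finset.sum_range_succ', Finset.sum_range_succ']
  have key := hf1.trans hsplit
  have hR : ∑ m ∈ Finset.range N,
        Mw m • (Polynomial.derivative (Polynomial.derivative (σm a f))).coeff m
      = ∑ m ∈ Finset.range N, (σm a f).coeff (m+2) :=
    Finset.sum_congr rfl fun m _ => Mw_coeff _ m
  rw [hR, ← coeff_zero_σm a f, ← coeff_one_σm a f]
  nth_rewrite 1 [key]
  ring
end Taylor

section PerT
open Finset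
variable {R : Type*} [CommRing R] [Algebra ℝ R]

lemma per_t (Kq : ℕ) (B : Fin Kq → Fin Kq → ℝ)
    (hB : ∀ k l : Fin Kq, Mw ((k:ℕ)+(l:ℕ)) = ∑ r, B r k * B r l) (c : ℕ → R) :
    ∑ k ∈ Finset.range Kq, ∑ l ∈ Finset.range Kq, Mw (k+l) • (c k * c l)
      = ∑ r : Fin Kq, (∑ k : Fin Kq, B r k • c (k:ℕ)) * (∑ l : Fin Kq, B r l • c (l:ℕ)) := by
  rw [← Fin.sum_univ_eq_sum_range (fun k => ∑ l ∈ Finset.range Kq, Mw (k+l) • (c k * c l)) Kq]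
  have h1 : ∀ k : Fin Kq, ∑ l ∈ Finset.range Kq, Mw ((k:ℕ)+l) • (c (k:ℕ) * c l)
      = ∑ l : Fin Kq, Mw ((k:ℕ)+(l:ℕ)) • (c (k:ℕ) * c (l:ℕ)) := fun k =>
    (Fin.sum_univ_eq_sum_range (fun l => Mw ((k:ℕ)+l) • (c (k:ℕ) * c l)) Kq).symm
  rw [Finset.sum_congr rfl (fun k _ => h1 k)]
  have h2 : ∀ k l : Fin Kq, Mw ((k:ℕ)+(l:ℕ)) • (c (k:ℕ) * c (l:ℕ))
      = ∑ r : Fin Kq, (B r k • c (k:ℕ)) * (B r l • c (l:ℕ)) := by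
    intro k l
    rw [hB k l, Finset.sum_smul]
    exact Finset.sum_congr rfl fun r _ => (smul_mul_smul_comm _ _ _ _).symm
  calc ∑ k : Fin Kq, ∑ l : Fin Kq, Mw ((k:ℕ)+(l:ℕ)) • (c (k:ℕ) * c (l:ℕ))
      = ∑ k : Fin Kq, ∑ l : Fin Kq, ∑ r : Fin Kq, (B r k • c (k:ℕ)) * (B r l • c (l:ℕ)) :=
        Finset.sum_congr rfl fun k _ => Finset.sum_congr rfl fun l _ => h2 k l
    _ = ∑ k : Fin Kq, ∑ r : Fin Kq, ∑ l : Fin Kq, (B r k • c (k:ℕ)) * (B r l • c (l:ℕ)) :=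
        Finset.sum_congr rfl fun k _ => Finset.sum_comm
    _ = ∑ r : Fin Kq, ∑ k : Fin Kq, ∑ l : Fin Kq, (B r k • c (k:ℕ)) * (B r l • c (l:ℕ)) :=
        Finset.sum_comm
    _ = ∑ r : Fin Kq, (∑ k : Fin Kq, B r k • c (k:ℕ)) * (∑ l : Fin Kq, B r l • c (l:ℕ)) := by
        apply Finset.sum_congr rfl; intro r _
        rw [Finset.sum_mul_sum]
end PerT

open MvPolynomial

/-- The Riesz functional of a truncated multi-sequence `w` applied to a polynomial. -/
noncomputable def Riesz {n : ℕ} (w : (Fin n →₀ ℕ) → ℝ) (p : MvPolynomial (Fin n) ℝ) : ℝ :=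
  ∑ α ∈ p.support, coeff α p * w α

/-- A polynomial is SOS-convex if its Hessian equals `V(x)ᵀ V(x)` for a polynomial matrix `V`. -/
def IsSOSConvex {n : ℕ} (f : MvPolynomial (Fin n) ℝ) : Prop :=
  ∃ (k : ℕ) (V : Fin k → Fin n → MvPolynomial (Fin n) ℝ),
    ∀ i j, pderiv i (pderiv j f) = ∑ t, V t i * V t j

section RieszL
variable {n : ℕ} (w : (Fin n →₀ ℕ) → ℝ)

lemma Riesz_eq_sum_of_subset {p : MvPolynomial (Fin n) ℝ} {s : Finset (Fin n →₀ ℕ)}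
    (h : p.support ⊆ s) : Riesz w p = ∑ α ∈ s, coeff α p * w α :=
  Finset.sum_subset h (fun α _ hα => by rw [notMem_support_iff.mp hα, zero_mul])

lemma Riesz_add (p q : MvPolynomial (Fin n) ℝ) : Riesz w (p+q) = Riesz w p + Riesz w q := by
  classical
  rw [Riesz_eq_sum_of_subset w (MvPolynomial.support_add),
    Riesz_eq_sum_of_subset w (Finset.subset_union_left (s₂ := q.support)),
    Riesz_eq_sum_of_subset w (Finset.subset_union_right (s₁ := p.support)),
    ← Finset.sum_add_distrib]
  exact Finset.sum_congr rfl fun α _ => by rw [MvPolynomial.coeff_add]; ring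

lemma Riesz_sum {ι : Type*} (s : Finset ι) (p : ι → MvPolynomial (Fin n) ℝ) :
    Riesz w (∑ i ∈ s, p i) = ∑ i ∈ s, Riesz w (p i) := by
  classical
  induction s using Finset.induction_on with
  | empty => simp [Riesz]
  | insert _ _ h ih => rw [Finset.sum_insert h, Finset.sum_insert h, Riesz_add, ih]

lemma Riesz_smul (x : ℝ) (p : MvPolynomial (Fin n) ℝ) : Riesz w (x • p) = x * Riesz w p := by
  rw [Riesz_eq_sum_of_subset w (MvPolynomial.support_smul : (x • p).support ⊆ p.support), Riesz, Finset.mul_sum]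
  exact Finset.sum_congr rfl fun α _ => by rw [MvPolynomial.coeff_smul, smul_eq_mul]; ring

lemma Riesz_sub (p q : MvPolynomial (Fin n) ℝ) : Riesz w (p-q) = Riesz w p - Riesz w q := by
  have hq : -q = (-1 : ℝ) • q := by rw [neg_one_smul]
  rw [sub_eq_add_neg, Riesz_add, hq, Riesz_smul]
  ring

lemma Riesz_C (c : ℝ) : Riesz w (MvPolynomial.C c) = c * w 0 := by
  classical
  by_cases hc : c = 0
  · simp [hc, Riesz]
  · rw [Riesz, MvPolynomial.C_apply, MvPolynomial.support_monomial, if_neg hc]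
    simp [MvPolynomial.coeff_monomial]

lemma Riesz_X (i : Fin n) : Riesz w (MvPolynomial.X i) = w (Finsupp.single i 1) := by
  rw [Riesz, MvPolynomial.support_X]
  simp

end RieszL

theorem stmt12 {n d₁ : ℕ} (f : MvPolynomial (Fin n) ℝ) (hf : IsSOSConvex f)
    (hdeg : f.totalDegree ≤ 2 * d₁)
    (w : (Fin n →₀ ℕ) → ℝ) (hw0 : w 0 = 1)
    (hpsd : ∀ p : MvPolynomial (Fin n) ℝ, p.totalDegree ≤ d₁ → 0 ≤ Riesz w (p * p)) :
    eval (fun i => w (Finsupp.single i 1)) f ≤ Riesz w f := by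
  classical
  set a : Fin n → ℝ := fun i => w (Finsupp.single i 1) with ha
  have haa : ∀ i, w (Finsupp.single i 1) = a i := fun i => by rw [ha]
  by_cases hd1 : d₁ = 0
  · subst hd1
    have h0 : f.totalDegree = 0 := by omega
    have hsupp : ∀ α ∈ f.support, α = (0 : Fin n →₀ ℕ) := by
      intro α hα
      ext x
      exact (totalDegree_eq_zero_iff (Fin n) f).mp h0 α hα x
    have heq : eval a f = Riesz w f := by
      rw [eval_eq, Riesz]
      apply Finset.sum_congr rfl
      intro α hα
      rw [hsupp α hα]
      simp [hw0]
    rw [heq]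
  · have hd1' : 1 ≤ d₁ := Nat.one_le_iff_ne_zero.mpr hd1
    obtain ⟨kk, V, hV⟩ := hf
    set Q : Fin kk → Polynomial (MvPolynomial (Fin n) ℝ) :=
      fun t => ∑ i, σm a (V t i) * Polynomial.C (uu a i) with hQ
    set Kq : ℕ := (Finset.univ.sup fun t => (Q t).natDegree) + 1 with hKq
    set N : ℕ := max ((σm a f).natDegree + 1) (2*Kq) with hNdef
    have hN1 : (σm a f).natDegree + 1 ≤ N := le_max_left _ _
    have hN2 : 2*Kq ≤ N := le_max_right _ _
    obtain ⟨B, hB⟩ := hankel_decomp Kq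
    set g : MvPolynomial (Fin n) ℝ :=
      f - MvPolynomial.C (eval a f) - ∑ i, MvPolynomial.C (eval a (pderiv i f)) * uu a i with hg
    have htay : g = ∑ m ∈ Finset.range N,
        Mw m • (Polynomial.derivative (Polynomial.derivative (σm a f))).coeff m :=
      taylor_g a f N (by omega)
    have hdd' : Polynomial.derivative (Polynomial.derivative (σm a f)) = ∑ t, Q t * Q t := by
      rw [dd_σm_sos a f V hV]
    have hQdeg : ∀ t, (Q t).natDegree < Kq := fun t =>
      Nat.lt_succ_of_le (Finset.le_sup (f := fun t => (Q t).natDegree) (Finset.mem_univ t))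
    have hsum : g = ∑ t, ∑ r : Fin Kq, (∑ k : Fin Kq, B r k • (Q t).coeff (k:ℕ))
        * (∑ l : Fin Kq, B r l • (Q t).coeff (l:ℕ)) := by
      rw [htay, hdd']
      calc ∑ m ∈ Finset.range N, Mw m • (∑ t, Q t * Q t).coeff m
          = ∑ m ∈ Finset.range N, ∑ t, Mw m • (Q t * Q t).coeff m := by
            apply Finset.sum_congr rfl; intro m _
            rw [Polynomial.finset_sum_coeff, Finset.smul_sum]
        _ = ∑ t, ∑ m ∈ Finset.range N, Mw m • (Q t * Q t).coeff m := Finset.sum_comm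
        _ = ∑ t, ∑ r : Fin Kq, (∑ k : Fin Kq, B r k • (Q t).coeff (k:ℕ))
              * (∑ l : Fin Kq, B r l • (Q t).coeff (l:ℕ)) := by
            apply Finset.sum_congr rfl; intro t _
            rw [weighted_sq (Q t) Kq N (hQdeg t) (by omega),
              per_t Kq B hB (fun m => (Q t).coeff m)]
    set pp : Fin kk × Fin Kq → MvPolynomial (Fin n) ℝ :=
      fun tr => ∑ k : Fin Kq, B tr.2 k • (Q tr.1).coeff (k:ℕ) with hpp
    have hsos : g = ∑ tr : Fin kk × Fin Kq, pp tr * pp tr := by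
      rw [Fintype.sum_prod_type]
      exact hsum
    have hudeg : ∀ i, (uu a i).totalDegree ≤ 1 := by
      intro i
      refine (totalDegree_sub _ _).trans ?_
      simp
    have hgdeg : g.totalDegree ≤ 2 * d₁ := by
      rw [hg]
      refine (totalDegree_sub _ _).trans ?_
      apply max_le
      · refine (totalDegree_sub _ _).trans ?_
        apply max_le hdeg
        simp
      · refine (totalDegree_finset_sum _ _).trans ?_
        apply Finset.sup_le
        intro i _
        refine (totalDegree_mul _ _).trans ?_
        have := hudeg i
        simp only [totalDegree_C]
        omega
    have hppdeg : ∀ tr : Fin kk × Fin Kq, (pp tr).totalDegree ≤ d₁ := by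
      intro tr
      exact sos_degree_le Finset.univ pp d₁ (by rw [← hsos]; exact hgdeg) tr (Finset.mem_univ tr)
    have hRg : 0 ≤ Riesz w g := by
      rw [hsos, Riesz_sum]
      exact Finset.sum_nonneg fun tr _ => hpsd (pp tr) (hppdeg tr)
    have hRg' : Riesz w g = Riesz w f - eval a f := by
      rw [hg, Riesz_sub, Riesz_sub, Riesz_C, hw0, mul_one, Riesz_sum]
      have hz : ∀ i ∈ Finset.univ, Riesz w (MvPolynomial.C (eval a (pderiv i f)) * uu a i) = 0 := by
        intro i _
        have hexp : MvPolynomial.C (MvPolynomial.eval a (pderiv i f)) * uu a i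
            = MvPolynomial.eval a (pderiv i f) • MvPolynomial.X i
              - MvPolynomial.C (MvPolynomial.eval a (pderiv i f) * a i) := by
          rw [MvPolynomial.smul_eq_C_mul, MvPolynomial.C_mul]
          ring
        rw [hexp, Riesz_sub, Riesz_smul, Riesz_X, Riesz_C, hw0, mul_one, haa]
        ring
      rw [Finset.sum_congr rfl hz, Finset.sum_const_zero]
      ring
    linarith [hRg, hRg'.le, hRg'.ge]
end

section
/- If (x̂, ŵ) is feasible for the relaxed problem (with moment matrix constraint M_{d₁}[ŵ] ⪰ 0, ŵ₀ = 1, ⟨uᵢ, ŵ⟩ ≥ 0 and x̂ = π(ŵ)), and each −uᵢ is SOS-convex, then uᵢ(x̂) ≥ 0 for every i; i.e., x̂ belongs to X = {x : u₁(x) ≥ 0, …, u_{m₁}(x) ≥ 0}. -/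
open MvPolynomial

namespace Aux

variable {n : ℕ} (w : (Fin n →₀ ℕ) → ℝ)

lemma Riesz_eq_sum_of_subset {p : MvPolynomial (Fin n) ℝ} {s : Finset (Fin n →₀ ℕ)}
    (h : p.support ⊆ s) : Riesz w p = ∑ α ∈ s, coeff α p * w α := by
  unfold Riesz
  exact (Finset.sum_subset (f := fun α => coeff α p * w α) h (fun x _ hx =>
    mul_eq_zero_of_left (MvPolynomial.notMem_support_iff.mp hx) _))

lemma Riesz_zero : Riesz w 0 = 0 := by simp [Riesz]

lemma Riesz_add (p q : MvPolynomial (Fin n) ℝ) :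
    Riesz w (p + q) = Riesz w p + Riesz w q := by
  classical
  rw [Riesz_eq_sum_of_subset w (s := p.support ∪ q.support)
      (MvPolynomial.support_add ..),
    Riesz_eq_sum_of_subset w (s := p.support ∪ q.support) Finset.subset_union_left,
    Riesz_eq_sum_of_subset w (s := p.support ∪ q.support) Finset.subset_union_right,
    ← Finset.sum_add_distrib]
  exact Finset.sum_congr rfl fun α _ => by rw [MvPolynomial.coeff_add, add_mul]

lemma Riesz_smul (c : ℝ) (p : MvPolynomial (Fin n) ℝ) :
    Riesz w (c • p) = c * Riesz w p := by
  rw [Riesz_eq_sum_of_subset w (s := p.support) MvPolynomial.support_smul, Riesz,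
    Finset.mul_sum]
  exact Finset.sum_congr rfl fun α _ => by
    rw [MvPolynomial.coeff_smul, smul_eq_mul, mul_assoc]

lemma Riesz_neg (p : MvPolynomial (Fin n) ℝ) : Riesz w (-p) = - Riesz w p := by
  have := Riesz_smul w (-1) p
  simpa using this

lemma Riesz_sub (p q : MvPolynomial (Fin n) ℝ) :
    Riesz w (p - q) = Riesz w p - Riesz w q := by
  rw [sub_eq_add_neg, Riesz_add, Riesz_neg, sub_eq_add_neg]

lemma Riesz_finset_sum {ι : Type*} (s : Finset ι) (f : ι → MvPolynomial (Fin n) ℝ) :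
    Riesz w (∑ i ∈ s, f i) = ∑ i ∈ s, Riesz w (f i) := by
  classical
  induction s using Finset.induction_on with
  | empty => simp [Riesz_zero]
  | @insert a s h ih => rw [Finset.sum_insert h, Finset.sum_insert h, Riesz_add, ih]

lemma Riesz_C (c : ℝ) : Riesz w (C c) = c * w 0 := by
  classical
  rcases eq_or_ne c 0 with rfl | hc
  · simp [Riesz_zero]
  · rw [Riesz, MvPolynomial.C_apply, MvPolynomial.support_monomial, if_neg hc]
    simp

lemma Riesz_X (i : Fin n) : Riesz w (X i) = w (Finsupp.single i 1) := by
  rw [Riesz, MvPolynomial.support_X]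
  simp


lemma totalDegree_pderiv_le (p : MvPolynomial (Fin n) ℝ) (i : Fin n) (d : ℕ)
    (h : p.totalDegree ≤ d + 1) : (pderiv i p).totalDegree ≤ d := by
  classical
  conv_lhs => rw [p.as_sum]
  rw [map_sum]
  refine (MvPolynomial.totalDegree_finset_sum _ _).trans (Finset.sup_le fun s hs => ?_)
  rw [MvPolynomial.pderiv_monomial]
  rcases eq_or_ne (s i) 0 with h0 | h0
  · simp [h0]
  · refine (MvPolynomial.totalDegree_monomial_le _ _).trans ?_
    have hle : Finsupp.single i 1 ≤ s := Finsupp.single_le_iff.mpr (Nat.one_le_iff_ne_zero.mpr h0)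
    have hsum : ((s - Finsupp.single i 1).sum fun _ e => e) + 1 = s.sum fun _ e => e := by
      have hadd : s - Finsupp.single i 1 + Finsupp.single i 1 = s := tsub_add_cancel_of_le hle
      calc ((s - Finsupp.single i 1).sum fun _ e => e) + 1
          = ((s - Finsupp.single i 1).sum fun _ e => e) +
              ((Finsupp.single i 1).sum fun _ e => e) := by
            rw [Finsupp.sum_single_index]; rfl
        _ = ((s - Finsupp.single i 1 + Finsupp.single i 1).sum fun _ e => e) := by
            rw [Finsupp.sum_add_index'] <;> intros <;> rfl
        _ = s.sum fun _ e => e := by rw [hadd]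
    have hs' : (s.sum fun _ e => e) ≤ d + 1 :=
      le_trans (MvPolynomial.le_totalDegree hs) h
    simp only [Function.id_def]
    omega

lemma degree_add_degree (β γ : Fin n →₀ ℕ) :
    (β + γ).degree = β.degree + γ.degree := by
  simp [Finsupp.degree_eq_weight_one, map_add]

lemma coeff_eq_zero_of_degree_gt {p : MvPolynomial (Fin n) ℝ} {β : Fin n →₀ ℕ}
    (h : p.totalDegree < β.degree) : coeff β p = 0 := by
  by_contra hc
  have := MvPolynomial.le_totalDegree (p := p) (s := β) (by rwa [MvPolynomial.mem_support_iff])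
  have hdeg : β.degree = β.sum fun _ e => e := rfl
  omega

lemma homogComp_top_mul {p q : MvPolynomial (Fin n) ℝ} {dp dq : ℕ}
    (hp : p.totalDegree ≤ dp) (hq : q.totalDegree ≤ dq) :
    homogeneousComponent (dp + dq) (p * q) =
      homogeneousComponent dp p * homogeneousComponent dq q := by
  classical
  ext α
  rw [coeff_homogeneousComponent, MvPolynomial.coeff_mul, MvPolynomial.coeff_mul]
  split_ifs with hα
  · refine Finset.sum_congr rfl fun x hx => ?_
    rw [Finset.HasAntidiagonal.mem_antidiagonal] at hx
    have hdd : x.1.degree + x.2.degree = dp + dq := by rw [← degree_add_degree, hx, hα]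
    rw [coeff_homogeneousComponent, coeff_homogeneousComponent]
    rcases eq_or_ne x.1.degree dp with h1 | h1
    · rw [if_pos h1, if_pos (by omega)]
    · rw [if_neg h1, zero_mul]
      rcases lt_or_gt_of_ne h1 with hlt | hgt
      · have h2 : coeff x.2 q = 0 := coeff_eq_zero_of_degree_gt (by omega)
        rw [h2, mul_zero]
      · have h2 : coeff x.1 p = 0 := coeff_eq_zero_of_degree_gt (by omega)
        rw [h2, zero_mul]
  · symm
    refine Finset.sum_eq_zero fun x hx => ?_
    rw [Finset.HasAntidiagonal.mem_antidiagonal] at hx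
    rw [coeff_homogeneousComponent, coeff_homogeneousComponent]
    split_ifs with h1 h2
    · exact absurd (by rw [← hx, degree_add_degree, h1, h2]) hα
    all_goals simp

lemma homogComp_totalDegree_ne_zero {p : MvPolynomial (Fin n) ℝ} (hp : p ≠ 0) :
    homogeneousComponent p.totalDegree p ≠ 0 := by
  classical
  have hne : p.support.Nonempty := by
    rwa [Finset.nonempty_iff_ne_empty, Ne, MvPolynomial.support_eq_empty]
  obtain ⟨α, hα, hsup⟩ :=
    Finset.exists_mem_eq_sup p.support hne fun s => s.sum fun _ e => e
  intro h
  have hc : coeff α (homogeneousComponent p.totalDegree p) = coeff α p := by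
    rw [coeff_homogeneousComponent,
      if_pos (show α.degree = p.totalDegree from hsup.symm)]
  rw [h, MvPolynomial.coeff_zero] at hc
  exact MvPolynomial.mem_support_iff.mp hα hc.symm

lemma two_mul_deg_le_sos {ι : Type*} [Fintype ι] (p : ι → MvPolynomial (Fin n) ℝ) (k : ι) :
    2 * (p k).totalDegree ≤ (∑ t, p t * p t).totalDegree := by
  classical
  set D := (Finset.univ : Finset ι).sup fun t => (p t).totalDegree with hDdef
  have hkD : (p k).totalDegree ≤ D :=
    Finset.le_sup (f := fun t => (p t).totalDegree) (Finset.mem_univ k)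
  rcases eq_or_ne D 0 with hD | hD
  · have h0 : (p k).totalDegree = 0 := by omega
    simp [h0]
  · obtain ⟨t₀, -, ht₀⟩ :=
      Finset.exists_mem_eq_sup (Finset.univ : Finset ι) ⟨k, Finset.mem_univ k⟩
        fun t => (p t).totalDegree
    have hpt₀ : p t₀ ≠ 0 := by
      intro h
      rw [h] at ht₀
      exact hD (ht₀.trans MvPolynomial.totalDegree_zero)
    have hcomp : homogeneousComponent (D + D) (∑ t, p t * p t) =
        ∑ t, homogeneousComponent D (p t) * homogeneousComponent D (p t) := by
      rw [map_sum]
      exact Finset.sum_congr rfl fun t _ =>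
        homogComp_top_mul
          (Finset.le_sup (f := fun t => (p t).totalDegree) (Finset.mem_univ t))
          (Finset.le_sup (f := fun t => (p t).totalDegree) (Finset.mem_univ t))
    have hnz : homogeneousComponent (D + D) (∑ t, p t * p t) ≠ 0 := by
      rw [hcomp]
      intro h
      have h0 : homogeneousComponent D (p t₀) = 0 := by
        apply MvPolynomial.funext
        intro x
        have hx := congrArg (MvPolynomial.eval x) h
        rw [map_sum, map_zero] at hx
        simp only [map_mul] at hx
        have := (Finset.sum_eq_zero_iff_of_nonneg fun t _ =>
          mul_self_nonneg (MvPolynomial.eval x (homogeneousComponent D (p t)))).mp hx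
            t₀ (Finset.mem_univ t₀)
        rw [map_zero]
        exact mul_self_eq_zero.mp this
      rw [show D = (p t₀).totalDegree from ht₀] at h0
      exact homogComp_totalDegree_ne_zero hpt₀ h0
    have hle : D + D ≤ (∑ t, p t * p t).totalDegree := by
      by_contra hlt
      push_neg at hlt
      exact hnz (homogeneousComponent_eq_zero _ _ hlt)
    omega

lemma totalDegree_aeval_le (g : Fin n → MvPolynomial (Fin n) ℝ)
    (hg : ∀ i, (g i).totalDegree ≤ 1) (p : MvPolynomial (Fin n) ℝ) :
    (aeval g p).totalDegree ≤ p.totalDegree := by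
  classical
  conv_lhs => rw [p.as_sum]
  rw [map_sum]
  refine (MvPolynomial.totalDegree_finset_sum _ _).trans (Finset.sup_le fun s hs => ?_)
  rw [MvPolynomial.aeval_monomial]
  refine (MvPolynomial.totalDegree_mul _ _).trans ?_
  have h1 : ((algebraMap ℝ (MvPolynomial (Fin n) ℝ)) (coeff s p)).totalDegree = 0 :=
    MvPolynomial.totalDegree_C _
  rw [h1, zero_add, Finsupp.prod]
  refine (MvPolynomial.totalDegree_finset_prod _ _).trans ?_
  calc ∑ i ∈ s.support, (g i ^ s i).totalDegree
      ≤ ∑ i ∈ s.support, s i := by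
        refine Finset.sum_le_sum fun i _ => ?_
        refine (MvPolynomial.totalDegree_pow _ _).trans ?_
        calc s i * (g i).totalDegree ≤ s i * 1 := Nat.mul_le_mul_left _ (hg i)
          _ = s i := Nat.mul_one _
    _ ≤ p.totalDegree := MvPolynomial.le_totalDegree hs

noncomputable def tau (a : Fin n → ℝ) (i : Fin n) : Polynomial (MvPolynomial (Fin n) ℝ) :=
  Polynomial.C (X i - C (a i)) * Polynomial.X + Polynomial.C (C (a i))

noncomputable def sigA (a : Fin n → ℝ) (t : ℝ) (i : Fin n) : MvPolynomial (Fin n) ℝ :=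
  C t * (X i - C (a i)) + C (a i)

noncomputable def evh (t : ℝ) :
    Polynomial (MvPolynomial (Fin n) ℝ) →ₐ[ℝ] MvPolynomial (Fin n) ℝ :=
  (Polynomial.aeval (C t : MvPolynomial (Fin n) ℝ)).restrictScalars ℝ

lemma evh_apply (t : ℝ) (P : Polynomial (MvPolynomial (Fin n) ℝ)) :
    evh t P = Polynomial.eval (C t) P := by
  change Polynomial.aeval (C t : MvPolynomial (Fin n) ℝ) P = _
  rw [Polynomial.coe_aeval_eq_eval]

lemma evh_aeval (a : Fin n → ℝ) (t : ℝ) (f : MvPolynomial (Fin n) ℝ) :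
    evh t (aeval (tau a) f) = aeval (sigA a t) f := by
  rw [MvPolynomial.comp_aeval_apply]
  have h : (fun i => evh t (tau a i)) = sigA a t := by
    funext i
    rw [evh_apply]
    simp only [tau, sigA, Polynomial.eval_add, Polynomial.eval_mul, Polynomial.eval_C,
      Polynomial.eval_X]
    ring
  rw [h]

lemma aeval_const (a : Fin n → ℝ) (f : MvPolynomial (Fin n) ℝ) :
    aeval (fun i => (C (a i) : MvPolynomial (Fin n) ℝ)) f = C (eval a f) := by
  have h1 : aeval a f = eval a f := by
    rw [← MvPolynomial.coe_aeval_eq_eval]; rfl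
  have h2 := MvPolynomial.comp_aeval_apply (f := a) (Algebra.ofId ℝ (MvPolynomial (Fin n) ℝ)) f
  have h3 : ∀ x : ℝ, Algebra.ofId ℝ (MvPolynomial (Fin n) ℝ) x = C x := fun x => by
    rw [Algebra.ofId_apply, MvPolynomial.algebraMap_eq]
  rw [h1] at h2
  simp only [h3] at h2
  exact h2.symm

lemma derivative_aeval_tau (a : Fin n → ℝ) (f : MvPolynomial (Fin n) ℝ) :
    Polynomial.derivative (aeval (tau a) f) =
      ∑ i, Polynomial.C (X i - C (a i)) * aeval (tau a) (pderiv i f) := by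
  classical
  induction f using MvPolynomial.induction_on with
  | C c =>
      have : (aeval (tau a) (C c) : Polynomial (MvPolynomial (Fin n) ℝ))
          = Polynomial.C (C c) := by
        rw [MvPolynomial.aeval_C]; rfl
      simp [this, MvPolynomial.pderiv_C]
  | add p q hp hq =>
      simp only [map_add, hp, hq, ← Finset.sum_add_distrib]
      exact Finset.sum_congr rfl fun i _ => by ring
  | mul_X p j hp =>
      have hdτ : Polynomial.derivative (tau a j) = Polynomial.C (X j - C (a j)) := by
        simp [tau]
      rw [map_mul, MvPolynomial.aeval_X, Polynomial.derivative_mul, hp, hdτ, Finset.sum_mul]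
      have hr : ∀ i : Fin n,
          Polynomial.C (X i - C (a i)) * aeval (tau a) (pderiv i (p * X j))
          = Polynomial.C (X i - C (a i)) * aeval (tau a) (pderiv i p) * tau a j
            + (if i = j then aeval (tau a) p * Polynomial.C (X j - C (a j)) else 0) := by
        intro i
        rw [MvPolynomial.pderiv_mul, map_add, map_mul, MvPolynomial.aeval_X, mul_add]
        congr 1
        · ring
        · rcases eq_or_ne i j with rfl | hij
          · rw [if_pos rfl, MvPolynomial.pderiv_X_self, mul_one]
            ring
          · rw [MvPolynomial.pderiv_X_of_ne (Ne.symm hij), mul_zero, map_zero, mul_zero,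
              if_neg hij]
      rw [Finset.sum_congr rfl fun i _ => hr i, Finset.sum_add_distrib,
        Finset.sum_ite_eq' Finset.univ j
          (fun _ => aeval (tau a) p * Polynomial.C (X j - C (a j)))]
      simp

noncomputable def Qmap (P : Polynomial (MvPolynomial (Fin n) ℝ)) : Polynomial ℝ :=
  ⟨Finsupp.mapRange (Riesz w) (Riesz_zero w) P.toFinsupp.coeff |> AddMonoidAlgebra.ofCoeff⟩

lemma Qmap_coeff (P : Polynomial (MvPolynomial (Fin n) ℝ)) (k : ℕ) :
    (Qmap w P).coeff k = Riesz w (P.coeff k) := by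
  rcases P with ⟨P⟩
  simp [Qmap, Polynomial.coeff]

lemma Qmap_natDegree_le (P : Polynomial (MvPolynomial (Fin n) ℝ)) :
    (Qmap w P).natDegree ≤ P.natDegree :=
  Polynomial.natDegree_le_iff_coeff_eq_zero.mpr fun N hN => by
    rw [Qmap_coeff, Polynomial.coeff_eq_zero_of_natDegree_lt hN, Riesz_zero]

lemma Qmap_derivative (P : Polynomial (MvPolynomial (Fin n) ℝ)) :
    (Qmap w P).derivative = Qmap w P.derivative := by
  ext k
  rw [Polynomial.coeff_derivative, Qmap_coeff, Qmap_coeff, Polynomial.coeff_derivative]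
  have hc : P.coeff (k + 1) * ((k : MvPolynomial (Fin n) ℝ) + 1)
      = ((k : ℝ) + 1) • P.coeff (k + 1) := by
    rw [MvPolynomial.smul_eq_C_mul, mul_comm]
    congr 1
    rw [map_add, map_one, map_natCast]
  rw [hc, Riesz_smul]
  ring

lemma Qmap_eval (t : ℝ) (P : Polynomial (MvPolynomial (Fin n) ℝ)) :
    (Qmap w P).eval t = Riesz w (Polynomial.eval (C t) P) := by
  have hQ : (Qmap w P).natDegree < P.natDegree + 1 :=
    Nat.lt_succ_of_le (Qmap_natDegree_le w P)
  rw [Polynomial.eval_eq_sum_range' hQ, Polynomial.eval_eq_sum_range' (Nat.lt_succ_self _),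
    Riesz_finset_sum]
  refine Finset.sum_congr rfl fun i _ => ?_
  rw [Qmap_coeff, ← map_pow, mul_comm (P.coeff i) _, ← MvPolynomial.smul_eq_C_mul, Riesz_smul]
  ring

lemma jensen (d₁ : ℕ) (hd₁ : 1 ≤ d₁) (f : MvPolynomial (Fin n) ℝ)
    (hf : IsSOSConvex f) (hdegf : f.totalDegree ≤ 2 * d₁)
    (hw0 : w 0 = 1)
    (hpsd : ∀ p : MvPolynomial (Fin n) ℝ, p.totalDegree ≤ d₁ → 0 ≤ Riesz w (p * p)) :
    eval (fun i => w (Finsupp.single i 1)) f ≤ Riesz w f := by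
  classical
  obtain ⟨K, V, hV⟩ := hf
  set a : Fin n → ℝ := fun i => w (Finsupp.single i 1) with ha
  set P : Polynomial (MvPolynomial (Fin n) ℝ) := aeval (tau a) f with hPdef
  set Q : Polynomial ℝ := Qmap w P with hQdef
  have hb : ∀ i : Fin n, (X i - C (a i) : MvPolynomial (Fin n) ℝ).totalDegree ≤ 1 := by
    intro i
    rw [sub_eq_add_neg, ← map_neg]
    refine (MvPolynomial.totalDegree_add _ _).trans ?_
    simp [MvPolynomial.totalDegree_X, MvPolynomial.totalDegree_C]
  have hσ1 : ∀ (t : ℝ) (i : Fin n), (sigA a t i).totalDegree ≤ 1 := by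
    intro t i
    refine (MvPolynomial.totalDegree_add _ _).trans (max_le ?_ ?_)
    · refine le_trans (MvPolynomial.totalDegree_mul _ _) ?_
      have := hb i
      simp only [MvPolynomial.totalDegree_C, zero_add]
      exact this
    · simp [MvPolynomial.totalDegree_C]
  have hdegV : ∀ (k : Fin K) (i : Fin n), (V k i).totalDegree ≤ d₁ - 1 := by
    intro k i
    have h1 : (pderiv i (pderiv i f)).totalDegree ≤ 2 * d₁ - 2 := by
      refine totalDegree_pderiv_le _ _ _ ?_
      refine totalDegree_pderiv_le _ _ _ ?_
      omega
    have h2 := two_mul_deg_le_sos (fun t => V t i) k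
    rw [← hV i i] at h2
    omega
  set r : Fin K → ℝ → MvPolynomial (Fin n) ℝ :=
    fun k t => ∑ i, (X i - C (a i)) * aeval (sigA a t) (V k i) with hrdef
  have hdegr : ∀ k t, (r k t).totalDegree ≤ d₁ := by
    intro k t
    refine (MvPolynomial.totalDegree_finset_sum _ _).trans (Finset.sup_le fun i _ => ?_)
    refine (MvPolynomial.totalDegree_mul _ _).trans ?_
    have h1 := (totalDegree_aeval_le (sigA a t) (hσ1 t) (V k i)).trans (hdegV k i)
    have h2 := hb i
    omega
  have hP1 : Polynomial.eval (C 1) P = f := by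
    have h := evh_aeval a 1 f
    rw [evh_apply] at h
    rw [hPdef, h]
    have hσ : sigA a 1 = X := by
      funext i; simp [sigA]
    rw [hσ]
    exact MvPolynomial.aeval_X_left_apply f
  have hP0eval : ∀ g : MvPolynomial (Fin n) ℝ,
      Polynomial.eval (C 0) (aeval (tau a) g) = C (eval a g) := by
    intro g
    have h := evh_aeval a 0 g
    rw [evh_apply] at h
    rw [h]
    have hσ : sigA a 0 = fun i => (C (a i) : MvPolynomial (Fin n) ℝ) := by
      funext i; simp [sigA]
    rw [hσ, aeval_const]
  have hQ1 : Q.eval 1 = Riesz w f := by rw [hQdef, Qmap_eval, hP1]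
  have hQ0 : Q.eval 0 = eval a f := by
    rw [hQdef, Qmap_eval, hP0eval, Riesz_C, hw0, mul_one]
  have hQd0 : Q.derivative.eval 0 = 0 := by
    rw [hQdef, Qmap_derivative, Qmap_eval, hPdef, derivative_aeval_tau,
      Polynomial.eval_finset_sum]
    have hterm : ∀ i : Fin n,
        Polynomial.eval (C 0) (Polynomial.C (X i - C (a i)) * aeval (tau a) (pderiv i f))
        = eval a (pderiv i f) • (X i - C (a i)) := by
      intro i
      rw [Polynomial.eval_mul, Polynomial.eval_C, hP0eval, mul_comm,
        ← MvPolynomial.smul_eq_C_mul]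
    rw [Finset.sum_congr rfl fun i _ => hterm i, Riesz_finset_sum]
    refine Finset.sum_eq_zero fun i _ => ?_
    rw [Riesz_smul, Riesz_sub, Riesz_X, Riesz_C, hw0, mul_one]
    simp [ha]
  have hd2 : ∀ t : ℝ,
      Polynomial.eval (C t) (Polynomial.derivative (Polynomial.derivative P))
      = ∑ k, r k t * r k t := by
    intro t
    rw [hPdef, derivative_aeval_tau, map_sum]
    have hstep : ∀ i : Fin n, Polynomial.derivative
        (Polynomial.C (X i - C (a i)) * aeval (tau a) (pderiv i f))
        = Polynomial.C (X i - C (a i)) *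
            ∑ j, Polynomial.C (X j - C (a j)) * aeval (tau a) (pderiv j (pderiv i f)) := by
      intro i
      rw [Polynomial.derivative_C_mul, derivative_aeval_tau]
    rw [Finset.sum_congr rfl fun i _ => hstep i, Polynomial.eval_finset_sum]
    have hev : ∀ i : Fin n, Polynomial.eval (C t) (Polynomial.C (X i - C (a i)) *
          ∑ j, Polynomial.C (X j - C (a j)) * aeval (tau a) (pderiv j (pderiv i f)))
        = ∑ j, ∑ k, (X i - C (a i)) * ((X j - C (a j)) *
            (aeval (sigA a t) (V k j) * aeval (sigA a t) (V k i))) := by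
      intro i
      rw [Polynomial.eval_mul, Polynomial.eval_C, Polynomial.eval_finset_sum, Finset.mul_sum]
      refine Finset.sum_congr rfl fun j _ => ?_
      rw [Polynomial.eval_mul, Polynomial.eval_C]
      have haev : Polynomial.eval (C t) (aeval (tau a) (pderiv j (pderiv i f)))
          = aeval (sigA a t) (pderiv j (pderiv i f)) := by
        rw [← evh_apply, evh_aeval]
      rw [haev, hV j i, map_sum, Finset.mul_sum, Finset.mul_sum]
      refine Finset.sum_congr rfl fun k _ => ?_
      rw [map_mul]
    rw [Finset.sum_congr rfl fun i _ => hev i]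
    have hrr : ∀ k : Fin K, r k t * r k t
        = ∑ i, ∑ j, (X i - C (a i)) * ((X j - C (a j)) *
            (aeval (sigA a t) (V k j) * aeval (sigA a t) (V k i))) := by
      intro k
      rw [hrdef]
      rw [Finset.sum_mul_sum]
      refine Finset.sum_congr rfl fun i _ => Finset.sum_congr rfl fun j _ => by ring
    rw [Finset.sum_congr rfl fun k _ => hrr k]
    refine Eq.trans (Finset.sum_congr rfl fun i _ => Finset.sum_comm)
      Finset.sum_comm
  have hQ'' : ∀ t : ℝ, 0 ≤ (Polynomial.derivative (Polynomial.derivative Q)).eval t := by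
    intro t
    rw [hQdef, Qmap_derivative, Qmap_derivative, Qmap_eval, hd2, Riesz_finset_sum]
    exact Finset.sum_nonneg fun k _ => hpsd _ (hdegr k t)
  have hDmono : Monotone fun t : ℝ => Q.derivative.eval t :=
    monotone_of_deriv_nonneg (Polynomial.differentiable _)
      (fun x => by rw [Polynomial.deriv]; exact hQ'' x)
  obtain ⟨c, hc01, hc⟩ := exists_deriv_eq_slope (f := fun t : ℝ => Q.eval t)
    (a := (0:ℝ)) (b := (1:ℝ)) one_pos
    Q.continuousOn Q.differentiableOn
  rw [Polynomial.deriv] at hc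
  have h0c : (0:ℝ) ≤ Q.derivative.eval c := by
    have hmono := hDmono (le_of_lt hc01.1)
    simpa [hQd0] using hmono
  rw [hc, hQ1, hQ0] at h0c
  have : 0 ≤ Riesz w f - eval a f := by
    have h10 : (1:ℝ) - 0 = 1 := by norm_num
    rw [h10, div_one] at h0c
    linarith
  linarith

lemma eq_C_of_totalDegree_eq_zero {p : MvPolynomial (Fin n) ℝ} (h : p.totalDegree = 0) :
    p = C (coeff 0 p) := by
  ext α
  rcases eq_or_ne α 0 with rfl | hα
  · simp
  · rw [MvPolynomial.coeff_C, if_neg (Ne.symm hα)]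
    by_contra hc
    have hmem : α ∈ p.support := MvPolynomial.mem_support_iff.mpr hc
    have h0 := (MvPolynomial.totalDegree_eq_zero_iff _ p).mp h α hmem
    exact hα (Finsupp.ext h0)

end Aux

theorem stmt13 {n d₁ m₁ : ℕ} (u : Fin m₁ → MvPolynomial (Fin n) ℝ)
    (hu : ∀ i, IsSOSConvex (-(u i)))
    (hdeg : ∀ i, (u i).totalDegree ≤ 2 * d₁)
    (w : (Fin n →₀ ℕ) → ℝ) (hw0 : w 0 = 1)
    (hpsd : ∀ p : MvPolynomial (Fin n) ℝ, p.totalDegree ≤ d₁ → 0 ≤ Riesz w (p * p))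
    (hwu : ∀ i, 0 ≤ Riesz w (u i))
    (xhat : Fin n → ℝ) (hx : xhat = fun i => w (Finsupp.single i 1)) :
    ∀ i, 0 ≤ eval xhat (u i) := by
  intro i
  rcases Nat.eq_zero_or_pos d₁ with hd0 | hd1
  · have hdeg0 : (u i).totalDegree = 0 := by
      have := hdeg i
      omega
    have hC := Aux.eq_C_of_totalDegree_eq_zero hdeg0
    have hR := hwu i
    rw [hC, Aux.Riesz_C w, hw0, mul_one] at hR
    rw [hC, MvPolynomial.eval_C]
    exact hR
  · have hnegdeg : (-(u i)).totalDegree ≤ 2 * d₁ := by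
      have h1 : (-(u i)) = (-1 : ℝ) • (u i) := by
        rw [neg_one_smul]
      rw [h1]
      exact (MvPolynomial.totalDegree_smul_le _ _).trans (hdeg i)
    have hj := Aux.jensen w d₁ hd1 (-(u i)) (hu i) hnegdeg hw0 hpsd
    rw [map_neg, Aux.Riesz_neg] at hj
    have := hwu i
    rw [hx]
    linarith
end

section
/- Order-statistics quantile upper bound: let ξ⁽¹⁾,…,ξ⁽ᴺ⁾ be i.i.d. samples of ξ and let G(ξ) be a real-valued measurable function; order the samples so that G(ξ⁽¹⁾) ≤ ⋯ ≤ G(ξ⁽ᴺ⁾). For ε, β ∈ (0,1), if L satisfies Σ_{i=0}^{L−1} C(N,i)(1−ε)^i ε^{N−i} ≥ 1−β, then with probability at least 1−β, G(ξ⁽ᴸ⁾) is an upper bound on the (1−ε)-quantile of G(ξ), i.e., P(G(ξ⁽ᴸ⁾) ≥ q_{1−ε}) ≥ 1−β where q_{1−ε} = inf{t : P(G(ξ) ≤ t) ≥ 1−ε}. -/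
open MeasureTheory ProbabilityTheory
open scoped ENNReal


noncomputable def binCdf (N L : ℕ) (p : ℝ) : ℝ :=
  ∑ k ∈ Finset.range L, (N.choose k : ℝ) * p ^ k * (1 - p) ^ (N - k)

lemma binCdf_succ (N L : ℕ) (p : ℝ) :
    binCdf (N+1) (L+1) p = (1-p) * binCdf N (L+1) p + p * binCdf N L p := by
  unfold binCdf
  rw [Finset.sum_range_succ' (fun k => ((N+1).choose k : ℝ) * p ^ k * (1 - p) ^ (N + 1 - k)),
      Finset.mul_sum, Finset.sum_range_succ' (fun k => (1-p) * ((N.choose k : ℝ) * p ^ k * (1 - p) ^ (N - k))),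
      Finset.mul_sum]
  have h1 : ∀ k ∈ Finset.range L, ((N+1).choose (k+1) : ℝ) * p ^ (k+1) * (1 - p) ^ (N + 1 - (k+1))
      = (1-p) * ((N.choose (k+1) : ℝ) * p ^ (k+1) * (1 - p) ^ (N - (k+1))) + p * ((N.choose k : ℝ) * p ^ k * (1 - p) ^ (N - k)) := by
    intro k _
    rw [Nat.choose_succ_succ, Nat.cast_add]
    rcases lt_or_ge k N with hk | hk
    · have e1 : N + 1 - (k+1) = N - k := by omega
      have e2 : N - k = (N - (k+1)) + 1 := by omega
      rw [e1, e2]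
      ring
    · have e0 : N.choose (k+1) = 0 := Nat.choose_eq_zero_of_lt (by omega)
      have e1 : N + 1 - (k+1) = N - k := by omega
      rw [e0, e1]
      push_cast
      ring
  rw [Finset.sum_congr rfl h1, Finset.sum_add_distrib]
  simp [Nat.sub_zero]
  ring

lemma binCdf_term_nonneg (N : ℕ) {p : ℝ} (hp0 : 0 ≤ p) (hp1 : p ≤ 1) (k : ℕ) :
    0 ≤ (N.choose k : ℝ) * p ^ k * (1 - p) ^ (N - k) := by
  have := pow_nonneg hp0 k
  have := pow_nonneg (by linarith : (0:ℝ) ≤ 1 - p) (N - k)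
  positivity

lemma binCdf_mono_L (N : ℕ) {L L' : ℕ} (h : L ≤ L') {p : ℝ} (hp0 : 0 ≤ p) (hp1 : p ≤ 1) :
    binCdf N L p ≤ binCdf N L' p := by
  unfold binCdf
  exact Finset.sum_le_sum_of_subset_of_nonneg (Finset.range_subset_range.mpr h)
    (fun k _ _ => binCdf_term_nonneg N hp0 hp1 k)

lemma binCdf_anti (N : ℕ) (L : ℕ) {p p' : ℝ} (hp0 : 0 ≤ p) (hp'1 : p' ≤ 1) (h : p ≤ p') :
    binCdf N L p' ≤ binCdf N L p := by
  induction N generalizing L with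
  | zero =>
    cases L with
    | zero => simp [binCdf]
    | succ L =>
      have h1 : ∀ q : ℝ, binCdf 0 (L+1) q = 1 := by
        intro q
        unfold binCdf
        rw [Finset.sum_eq_single 0]
        · simp
        · intro k _ hk
          rw [Nat.choose_eq_zero_of_lt (by omega)]
          simp
        · simp
      rw [h1, h1]
  | succ N ih =>
    cases L with
    | zero => simp [binCdf]
    | succ L =>
      rw [binCdf_succ, binCdf_succ]
      have hp1 : p ≤ 1 := le_trans h hp'1
      have hp'0 : 0 ≤ p' := le_trans hp0 h
      have hA : binCdf N (L+1) p' ≤ binCdf N (L+1) p := ih (L+1)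
      have hB : binCdf N L p' ≤ binCdf N L p := ih L
      have hBA : binCdf N L p ≤ binCdf N (L+1) p := binCdf_mono_L N (by omega) hp0 hp1
      have hAnn : 0 ≤ binCdf N L p' := by
        unfold binCdf
        exact Finset.sum_nonneg fun k _ => binCdf_term_nonneg N hp'0 hp'1 k
      nlinarith


lemma quantile_bound {α : Type*} [MeasurableSpace α] (ν : Measure α) [IsProbabilityMeasure ν]
    (G : α → ℝ) (hG : Measurable G) {c : ℝ≥0∞} (hc0 : 0 < c) (hc1 : c < 1) :
    ν {x | G x < sInf {t : ℝ | c ≤ ν {x | G x ≤ t}}} ≤ c := by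
  set S : Set ℝ := {t : ℝ | c ≤ ν {x | G x ≤ t}} with hS
  set q : ℝ := sInf S with hq
  -- S nonempty
  have hSne : S.Nonempty := by
    have hmono : Monotone (fun n : ℕ => {x | G x ≤ (n : ℝ)}) := by
      intro n m hnm x hx
      simp only [Set.mem_setOf_eq] at *
      exact le_trans hx (by exact_mod_cast hnm)
    have hun : (⋃ n : ℕ, {x | G x ≤ (n : ℝ)}) = Set.univ := by
      ext x
      simp only [Set.mem_iUnion, Set.mem_univ, iff_true, Set.mem_setOf_eq]
      exact exists_nat_ge (G x)
    have ht := MeasureTheory.tendsto_measure_iUnion_atTop (μ := ν) hmono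
    rw [hun, measure_univ] at ht
    have := (tendsto_order.1 ht).1 c hc1
    obtain ⟨n, hn⟩ := this.exists
    exact ⟨(n : ℝ), le_of_lt hn⟩
  -- S bddBelow
  have hbdd : BddBelow S := by
    have hanti : Antitone (fun n : ℕ => {x | G x ≤ -(n : ℝ)}) := by
      intro n m hnm x hx
      simp only [Set.mem_setOf_eq] at *
      have : (n:ℝ) ≤ (m:ℝ) := by exact_mod_cast hnm
      linarith
    have hint : (⋂ n : ℕ, {x | G x ≤ -(n : ℝ)}) = ∅ := by
      ext x
      simp only [Set.mem_iInter, Set.mem_empty_iff_false, iff_false, Set.mem_setOf_eq, not_forall]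
      obtain ⟨n, hn⟩ := exists_nat_gt (-G x)
      exact ⟨n, by push_neg; linarith⟩
    have ht := MeasureTheory.tendsto_measure_iInter_atTop (μ := ν) (s := fun n : ℕ => {x | G x ≤ -(n:ℝ)})
      (fun n => (hG measurableSet_Iic).nullMeasurableSet) hanti ⟨0, measure_ne_top ν _⟩
    rw [hint, measure_empty] at ht
    obtain ⟨n0, hn0⟩ := ((tendsto_order.1 ht).2 c hc0).exists
    refine ⟨-(n0 : ℝ), fun s hs => ?_⟩
    by_contra hlt
    push_neg at hlt
    have : ν {x | G x ≤ s} ≤ ν {x | G x ≤ -(n0:ℝ)} :=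
      measure_mono (fun x hx => le_trans hx (le_of_lt hlt))
    exact absurd hs (not_le.mpr (lt_of_le_of_lt this hn0))
  -- main bound
  have hun : {x | G x < q} = ⋃ n : ℕ, {x | G x ≤ q - 1/(n+1)} := by
    ext x
    simp only [Set.mem_iUnion, Set.mem_setOf_eq]
    constructor
    · intro hx
      obtain ⟨n, hn⟩ := exists_nat_one_div_lt (show 0 < q - G x by linarith)
      exact ⟨n, by linarith⟩
    · rintro ⟨n, hn⟩
      have : 0 < 1/((n:ℝ)+1) := by positivity
      linarith
  rw [hun]
  have hdir : Directed (fun x1 x2 : Set α => x1 ⊆ x2) (fun n : ℕ => {x | G x ≤ q - 1/(n+1)}) := by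
    apply Monotone.directed_le
    intro n m hnm x hx
    have : 1/((m:ℝ)+1) ≤ 1/((n:ℝ)+1) := by
      apply one_div_le_one_div_of_le (by positivity)
      exact_mod_cast by omega
    simp only [Set.mem_setOf_eq] at *
    linarith
  rw [hdir.measure_iUnion]
  apply iSup_le
  intro n
  have htq : q - 1/((n:ℝ)+1) < q := by
    have : 0 < 1/((n:ℝ)+1) := by positivity
    linarith
  have hnot : (q - 1/((n:ℝ)+1)) ∉ S := fun hmem => absurd (csInf_le hbdd hmem) (not_le.mpr htq)
  exact le_of_lt (not_le.mp hnot)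


theorem stmt18 {Ω : Type*} [MeasurableSpace Ω] (P : Measure Ω) [IsProbabilityMeasure P]
    {r N : ℕ} (ν : Measure (Fin r → ℝ)) [IsProbabilityMeasure ν]
    (ξs : Fin N → Ω → (Fin r → ℝ)) (hmeas : ∀ i, Measurable (ξs i))
    (hindep : iIndepFun ξs P)
    (hdist : ∀ i, Measure.map (ξs i) P = ν)
    (G : (Fin r → ℝ) → ℝ) (hG : Measurable G)
    (ε β : ℝ) (hε : ε ∈ Set.Ioo (0 : ℝ) 1) (hβ : β ∈ Set.Ioo (0 : ℝ) 1)
    (L : ℕ)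
    (hL : 1 - β ≤ ∑ i ∈ Finset.range L, (N.choose i : ℝ) * (1 - ε) ^ i * ε ^ (N - i)) :
    ENNReal.ofReal (1 - β) ≤
      P {ω | {i : Fin N | G (ξs i ω) <
        sInf {t : ℝ | ENNReal.ofReal (1 - ε) ≤ ν {ζ | G ζ ≤ t}}}.ncard < L} := by
  classical
  obtain ⟨hε0, hε1⟩ := hε
  obtain ⟨hβ0, hβ1⟩ := hβ
  set c : ℝ≥0∞ := ENNReal.ofReal (1 - ε) with hc
  set q : ℝ := sInf {t : ℝ | c ≤ ν {ζ | G ζ ≤ t}} with hqdef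
  have hc0 : 0 < c := ENNReal.ofReal_pos.mpr (by linarith)
  have hc1 : c < 1 := by
    rw [hc, ← ENNReal.ofReal_one]
    exact (ENNReal.ofReal_lt_ofReal_iff (by norm_num)).mpr (by linarith)
  have hqle : ν {x | G x < q} ≤ c := quantile_bound ν G hG hc0 hc1
  set E : Set (Fin r → ℝ) := {x | G x < q} with hE
  have hEm : MeasurableSet E := hG measurableSet_Iio
  set a := ν E with hadef
  set b := ν Eᶜ with hbdef
  have hab : a + b = 1 := by rw [hadef, hbdef, measure_add_measure_compl hEm]; exact measure_univ
  have haT : a ≠ ⊤ := measure_ne_top ν E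
  have hbT : b ≠ ⊤ := measure_ne_top ν Eᶜ
  set p : ℝ := a.toReal with hpdef
  have hp0 : 0 ≤ p := ENNReal.toReal_nonneg
  have hpε : p ≤ 1 - ε := ENNReal.toReal_le_of_le_ofReal (by linarith) hqle
  have hp1 : p ≤ 1 := by linarith
  have ha : a = ENNReal.ofReal p := (ENNReal.ofReal_toReal haT).symm
  have hbr : b.toReal = 1 - p := by
    have h1 := congrArg ENNReal.toReal hab
    rw [ENNReal.toReal_add haT hbT] at h1
    simp only [ENNReal.toReal_one] at h1
    linarith
  have hb : b = ENNReal.ofReal (1 - p) := by rw [← hbr, ENNReal.ofReal_toReal hbT]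
  -- pattern events
  set Pat : Finset (Fin N) → Set Ω := fun T => {ω | ∀ i, (i ∈ T ↔ G (ξs i ω) < q)} with hPat
  have hPatEq : ∀ T : Finset (Fin N),
      Pat T = ⋂ i, ξs i ⁻¹' (if i ∈ T then E else Eᶜ) := by
    intro T
    ext ω
    simp only [hPat, Set.mem_setOf_eq, Set.mem_iInter, Set.mem_preimage]
    constructor
    · intro h i
      by_cases hi : i ∈ T
      · simpa [hi, hE] using (h i).1 hi
      · have hn : ¬ G (ξs i ω) < q := fun hlt => hi ((h i).2 hlt)
        simp [hi, hE, hn]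
    · intro h i
      have hi := h i
      by_cases hmem : i ∈ T
      · simp only [hmem, if_true] at hi
        exact ⟨fun _ => hi, fun _ => hmem⟩
      · simp only [hmem, if_false, Set.mem_compl_iff, hE, Set.mem_setOf_eq] at hi
        exact ⟨fun hmemT => absurd hmemT hmem, fun hlt => absurd hlt hi⟩
  have hsetsM : ∀ T : Finset (Fin N), ∀ i, MeasurableSet (if i ∈ T then E else Eᶜ) := by
    intro T i
    split
    · exact hEm
    · exact hEm.compl
  have hPatM : ∀ T, MeasurableSet (Pat T) := by
    intro T
    rw [hPatEq]
    exact MeasurableSet.iInter fun i => (hmeas i) (hsetsM T i)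
  have hPatP : ∀ T : Finset (Fin N), P (Pat T) = a ^ T.card * b ^ (N - T.card) := by
    intro T
    have key := (ProbabilityTheory.iIndepFun_iff_measure_inter_preimage_eq_mul).1 hindep
      Finset.univ (sets := fun i => if i ∈ T then E else Eᶜ) (fun i _ => hsetsM T i)
    have h1 : Pat T = ⋂ i ∈ Finset.univ, ξs i ⁻¹' (if i ∈ T then E else Eᶜ) := by
      rw [hPatEq]; simp
    rw [h1, key]
    have h2 : ∀ i : Fin N, P (ξs i ⁻¹' (if i ∈ T then E else Eᶜ)) = (if i ∈ T then a else b) := by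
      intro i
      have h3 : P (ξs i ⁻¹' (if i ∈ T then E else Eᶜ)) = ν (if i ∈ T then E else Eᶜ) := by
        rw [← hdist i, Measure.map_apply (hmeas i) (hsetsM T i)]
      rw [h3]
      split <;> rfl
    rw [Finset.prod_congr rfl (fun i _ => h2 i),
      Finset.prod_ite (fun _ => a) (fun _ => b), Finset.prod_const, Finset.prod_const]
    have e1 : Finset.univ.filter (fun x => x ∈ T) = T := by ext x; simp
    have e2 : Finset.univ.filter (fun x => ¬ x ∈ T) = Tᶜ := by ext x; simp
    rw [e1, e2, Finset.card_compl, Fintype.card_fin]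
  -- the index family
  set 𝒯 : Finset (Finset (Fin N)) :=
    (Finset.range L).biUnion (fun k => Finset.powersetCard k Finset.univ) with h𝒯
  have h𝒯mem : ∀ T : Finset (Fin N), T ∈ 𝒯 ↔ T.card < L := by
    intro T
    simp only [h𝒯, Finset.mem_biUnion, Finset.mem_range, Finset.mem_powersetCard]
    constructor
    · rintro ⟨k, hk, _, rfl⟩; exact hk
    · intro h; exact ⟨T.card, h, Finset.subset_univ T, rfl⟩
  have hA : {ω | {i : Fin N | G (ξs i ω) < q}.ncard < L} = ⋃ T ∈ 𝒯, Pat T := by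
    ext ω
    have hTw : {i : Fin N | G (ξs i ω) < q}
        = ↑(Finset.univ.filter (fun i => G (ξs i ω) < q)) := by
      ext i; simp
    simp only [Set.mem_setOf_eq, Set.mem_iUnion]
    rw [hTw, Set.ncard_coe_finset]
    constructor
    · intro h
      refine ⟨Finset.univ.filter (fun i => G (ξs i ω) < q), (h𝒯mem _).2 h, ?_⟩
      intro i
      simp
    · rintro ⟨T, hT, hω⟩
      have heq : Finset.univ.filter (fun i => G (ξs i ω) < q) = T := by
        ext i
        simp only [Finset.mem_filter, Finset.mem_univ, true_and]
        exact (hω i).symm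
      rw [heq]
      exact (h𝒯mem T).1 hT
  have hdisj : (↑𝒯 : Set (Finset (Fin N))).PairwiseDisjoint Pat := by
    intro T _ T' _ hne
    simp only [Function.onFun]
    rw [Set.disjoint_left]
    intro ω hω hω'
    apply hne
    ext i
    exact (hω i).trans (hω' i).symm
  rw [hA, measure_biUnion_finset hdisj (fun T _ => hPatM T)]
  have hsum : ∑ T ∈ 𝒯, P (Pat T)
      = ∑ k ∈ Finset.range L, (N.choose k : ℝ≥0∞) * (a ^ k * b ^ (N - k)) := by
    rw [h𝒯, Finset.sum_biUnion]
    · apply Finset.sum_congr rfl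
      intro k hk
      have hconst : ∀ T ∈ Finset.powersetCard k (Finset.univ : Finset (Fin N)),
          P (Pat T) = a ^ k * b ^ (N - k) := by
        intro T hT
        rw [hPatP T, (Finset.mem_powersetCard.1 hT).2]
      rw [Finset.sum_congr rfl hconst, Finset.sum_const, Finset.card_powersetCard,
        Finset.card_univ, Fintype.card_fin, nsmul_eq_mul]
    · intro k _ k' _ hne
      simp only [Function.onFun]
      rw [Finset.disjoint_left]
      intro T hT hT'
      exact hne (((Finset.mem_powersetCard.1 hT).2.symm).trans (Finset.mem_powersetCard.1 hT').2)
  rw [hsum]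
  have hofsum : ∑ k ∈ Finset.range L, (N.choose k : ℝ≥0∞) * (a ^ k * b ^ (N - k))
      = ENNReal.ofReal (binCdf N L p) := by
    rw [binCdf, ENNReal.ofReal_sum_of_nonneg (fun k _ => binCdf_term_nonneg N hp0 hp1 k)]
    apply Finset.sum_congr rfl
    intro k _
    rw [ha, hb, ENNReal.ofReal_mul (by positivity), ENNReal.ofReal_mul (by positivity),
      ← ENNReal.ofReal_pow hp0, ← ENNReal.ofReal_pow (by linarith), ENNReal.ofReal_natCast]
    ring
  rw [hofsum]
  apply ENNReal.ofReal_le_ofReal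
  have hL' : 1 - β ≤ binCdf N L (1 - ε) := by
    have e : (1:ℝ) - (1 - ε) = ε := by ring
    rw [binCdf]
    simpa [e] using hL
  exact le_trans hL' (binCdf_anti N L hp0 (by linarith) hpε)
end

section
/- If the moment relaxation optimizer satisfies y* ∈ ℛ_d(U) (i.e., y* admits a representing measure supported in U) and the SOS relaxation and moment relaxation at order k have equal optimal values, then any optimizer x* of the SOS relaxation at order k is a global minimizer of the robust approximation problem minimizing cᵀx over x ∈ X with (Ax+b)ᵀ[ξ]_d ∈ 𝒫_d(U). -/
open Matrix

theorem stmt19 {n N : ℕ} (Xset : Set (Fin n → ℝ))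
    (Pcone Rcone Qk : Set (Fin N → ℝ))
    (hQP : Qk ⊆ Pcone)
    (hpair : ∀ p ∈ Pcone, ∀ y ∈ Rcone, 0 ≤ p ⬝ᵥ y)
    (A : Matrix (Fin N) (Fin n) ℝ) (b : Fin N → ℝ) (c : Fin n → ℝ)
    (xstar : Fin n → ℝ) (ystar : Fin N → ℝ)
    (hxX : xstar ∈ Xset) (hxQ : A *ᵥ xstar + b ∈ Qk)
    (hxopt : ∀ x, x ∈ Xset → A *ᵥ x + b ∈ Qk → c ⬝ᵥ xstar ≤ c ⬝ᵥ x)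
    (hyXstar : c - Aᵀ *ᵥ ystar ∈ {z : Fin n → ℝ | ∀ x' ∈ Xset, 0 ≤ z ⬝ᵥ x'})
    (hyR : ystar ∈ Rcone)
    (hgap : c ⬝ᵥ xstar = -(b ⬝ᵥ ystar)) :
    (xstar ∈ Xset ∧ A *ᵥ xstar + b ∈ Pcone) ∧
      ∀ x, x ∈ Xset → A *ᵥ x + b ∈ Pcone → c ⬝ᵥ xstar ≤ c ⬝ᵥ x := by
  refine ⟨⟨hxX, hQP hxQ⟩, fun x hxX' hxP => ?_⟩
  have h1 := hyXstar x hxX'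
  have h2 := hpair _ hxP ystar hyR
  have e1 : (c - Aᵀ *ᵥ ystar) ⬝ᵥ x = c ⬝ᵥ x - ystar ⬝ᵥ (A *ᵥ x) := by
    rw [sub_dotProduct, Matrix.dotProduct_mulVec, Matrix.mulVec_transpose]
  have e2 : (A *ᵥ x + b) ⬝ᵥ ystar = (A *ᵥ x) ⬝ᵥ ystar + b ⬝ᵥ ystar := by
    rw [add_dotProduct]
  rw [e1] at h1
  rw [e2, dotProduct_comm] at h2
  linarith
end
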